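/- Pythagorean inequality from a saddle-point: Let L₀(P,ζ) = L(P,ζ) − L(P,ζ₀) be the loss relative to a reference act ζ₀ with L(P,ζ₀) finite for all P ∈ Γ, and define the discrepancy D(P,ζ) = L(P,ζ) − inf_η L(P,η). If (P*, ζ*) is a saddle-point of the game (Γ, Z, L₀), then for all P ∈ Γ: D(P, ζ*) + D(P*, ζ₀) ≤ D(P, ζ₀). -/
import Mathlib


/-- Pythagorean inequality from a saddle-point of the relative game. -/
theorem stmt_9 {X Z : Type*} [Fintype X] (ℓ : X → Z → ℝ)
    (Γ : Set (X → ℝ)) (hΓ : ∀ P ∈ Γ, (∀ x, 0 ≤ P x) ∧ ∑ x, P x = 1)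
    (H : (X → ℝ) → ℝ) (ζ₀ ζstar : Z) (Pstar : X → ℝ)
    (hPstar : Pstar ∈ Γ)
    (hH : ∀ P ∈ Γ, IsGLB (Set.range fun ζ : Z => ∑ x, P x * ℓ x ζ) (H P))
    (hsaddle1 : ∀ ζ : Z,
      (∑ x, Pstar x * ℓ x ζstar) - (∑ x, Pstar x * ℓ x ζ₀)
        ≤ (∑ x, Pstar x * ℓ x ζ) - (∑ x, Pstar x * ℓ x ζ₀))
    (hsaddle2 : ∀ P ∈ Γ,
      (∑ x, P x * ℓ x ζstar) - (∑ x, P x * ℓ x ζ₀)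
        ≤ (∑ x, Pstar x * ℓ x ζstar) - (∑ x, Pstar x * ℓ x ζ₀)) :
    ∀ P ∈ Γ,
      ((∑ x, P x * ℓ x ζstar) - H P) + ((∑ x, Pstar x * ℓ x ζ₀) - H Pstar)
        ≤ (∑ x, P x * ℓ x ζ₀) - H P := by
  intro P hP
  have hlb : (∑ x, Pstar x * ℓ x ζstar) ∈
      lowerBounds (Set.range fun ζ : Z => ∑ x, Pstar x * ℓ x ζ) := by
    rintro y ⟨ζ, rfl⟩
    have := hsaddle1 ζ
    linarith
  have h1 : (∑ x, Pstar x * ℓ x ζstar) ≤ H Pstar := (hH Pstar hPstar).2 hlb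
  have h2 := hsaddle2 P hP
  linarith
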